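/- (Orthotropic W^{1,1} stability of the averaging interpolant, d = 2, with constant one in integral form.) Let N ∈ ℕ with N ≥ 2, h = 1/N, Ω = (0,1)². Let w : ℝ² → ℝ be continuously differentiable with w = 0 outside Ω. Let Π_h w(x) = Σ_{k ∈ {1,…,N−1}²} W_k(w) Λ_k(x), where Λ_k(x) = λ_{k₁}(x₁) λ_{k₂}(x₂) with λ_j(t) = max(0, 1 − |t/h − j|) and W_k(w) = ⨍_{hk + (−h/2, h/2)²} w dx. For k ∈ {0,…,N−1}² let Q_k = [hk₁, h(k₁+1)] × [hk₂, h(k₂+1)] and let 𝒩_k = ([h(k₁−1), h(k₁+2)] × [h(k₂−1), h(k₂+2)]) ∩ [0,1]² be its patch. Then for each i ∈ {1,2} and each k: ∫_{Q_k} |∂_i(Π_h w)(x)| dx ≤ ∫_{𝒩_k} |∂_i w(x)| dx, where ∂_i(Π_h w) denotes the (piecewise polynomial, almost-everywhere defined) partial derivative of Π_h w. -/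

import Mathlib

open MeasureTheory

/-- One-dimensional hat function with node `j h`: `λ_j(t) = max(0, 1 − |t/h − j|)`. -/
noncomputable def hatFn (h : ℝ) (j : ℕ) (t : ℝ) : ℝ := max 0 (1 - |t / h - (j : ℝ)|)

/-- Tensor-product hat function `Λ_k(x) = Π_i λ_{k_i}(x_i)`. -/
noncomputable def LamFn (d : ℕ) (h : ℝ) (k : Fin d → ℕ) (x : Fin d → ℝ) : ℝ :=
  ∏ i, hatFn h (k i) (x i)

/-- The open cube `h k + (−h/2, h/2)^d` centered at the node `h k`. -/
def nodeCube (d : ℕ) (h : ℝ) (k : Fin d → ℕ) : Set (Fin d → ℝ) :=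
  {x | ∀ i, |x i - h * (k i : ℝ)| < h / 2}

/-- Nodal value `W_k(w) = ⨍_{h k + (−h/2,h/2)^d} w dx`. -/
noncomputable def nodalW (d : ℕ) (h : ℝ) (k : Fin d → ℕ) (w : (Fin d → ℝ) → ℝ) : ℝ :=
  ⨍ x in nodeCube d h k, w x

/-- The averaging interpolant
`Π_h w (x) = Σ_{k ∈ {1,…,N−1}^d} W_k(w) Λ_k(x)` with `h = 1/N`. -/
noncomputable def interpQ (d N : ℕ) (w : (Fin d → ℝ) → ℝ) (x : Fin d → ℝ) : ℝ :=
  ∑ k ∈ Finset.Icc (fun _ => 1) (fun _ => N - 1),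
    nodalW d ((N : ℝ)⁻¹) k w * LamFn d ((N : ℝ)⁻¹) k x

/-- The open unit cube `Ω = (0,1)^d`. -/
def unitCube (d : ℕ) : Set (Fin d → ℝ) := {x | ∀ i, 0 < x i ∧ x i < 1}

/-- The `i`-th partial derivative (defined pointwise via `deriv` along the `i`-th
coordinate; it is the a.e.-defined partial derivative for piecewise polynomials). -/
noncomputable def pderivI (d : ℕ) (i : Fin d) (f : (Fin d → ℝ) → ℝ)
    (x : Fin d → ℝ) : ℝ :=
  deriv (fun t => f (Function.update x i t)) (x i)

/-- The closed mesh cell `Q_k = [h k₁, h(k₁+1)] × [h k₂, h(k₂+1)]`, `h = 1/N`. -/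
def meshCell (N : ℕ) (k : Fin 2 → ℕ) : Set (Fin 2 → ℝ) :=
  {x | ∀ j, (k j : ℝ) / N ≤ x j ∧ x j ≤ ((k j : ℝ) + 1) / N}

/-- The patch `𝒩_k = ([h(k₁−1), h(k₁+2)] × [h(k₂−1), h(k₂+2)]) ∩ [0,1]²`. -/
def meshPatch (N : ℕ) (k : Fin 2 → ℕ) : Set (Fin 2 → ℝ) :=
  {x | ∀ j, ((k j : ℝ) - 1) / N ≤ x j ∧ x j ≤ ((k j : ℝ) + 2) / N ∧
    0 ≤ x j ∧ x j ≤ 1}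

namespace S14
open Set

def other (i : Fin 2) : Fin 2 := if i = 0 then 1 else 0

lemma other_ne (i : Fin 2) : other i ≠ i := by fin_cases i <;> decide

lemma other_other (i : Fin 2) : other (other i) = i := by fin_cases i <;> decide

lemma eq_or_eq_other (i j : Fin 2) : j = i ∨ j = other i := by
  fin_cases i <;> fin_cases j <;> simp [other]

def pick {α : Type*} (i : Fin 2) (s t : α) : Fin 2 → α := fun j => if j = i then s else t

@[simp] lemma pick_self {α : Type*} (i : Fin 2) (s t : α) : pick i s t i = s := by simp [pick]

@[simp] lemma pick_other {α : Type*} (i : Fin 2) (s t : α) : pick i s t (other i) = t := by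
  simp [pick, other_ne]

lemma pick_swap {α : Type*} (i : Fin 2) (s t : α) : pick i s t = pick (other i) t s := by
  funext j
  rcases eq_or_eq_other i j with rfl | rfl
  · simp [pick, (other_ne j).symm]
  · simp [pick, other_ne]

lemma pick_eta {α : Type*} (i : Fin 2) (x : Fin 2 → α) : pick i (x i) (x (other i)) = x := by
  funext j
  rcases eq_or_eq_other i j with rfl | rfl <;> simp

lemma fin2_cases (i : Fin 2) : i = 0 ∨ i = 1 := by omega

lemma measurableSet_pi_pick (i : Fin 2) {s t : Set ℝ} (hs : MeasurableSet s)
    (ht : MeasurableSet t) : MeasurableSet (Set.univ.pi (pick i s t)) := by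
  apply MeasurableSet.univ_pi
  intro j
  rcases eq_or_eq_other i j with rfl | rfl <;> simpa

lemma preimage_finTwoArrow (i : Fin 2) (s t : Set ℝ) :
    (MeasurableEquiv.finTwoArrow : (Fin 2 → ℝ) ≃ᵐ ℝ × ℝ) ⁻¹' ((pick i s t 0) ×ˢ (pick i s t 1)) =
      Set.univ.pi (pick i s t) := by
  ext x
  simp only [MeasurableEquiv.finTwoArrow, Set.mem_preimage, Set.mem_prod, Set.mem_pi,
    Set.mem_univ, forall_true_left]
  constructor
  · rintro ⟨h0, h1⟩ j
    fin_cases j <;> simpa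
  · intro h
    exact ⟨h 0, h 1⟩

lemma integral_pick_zero (s t : Set ℝ) (hs : MeasurableSet s) (ht : MeasurableSet t)
    (f : ℝ → ℝ → ℝ)
    (hf : IntegrableOn (fun x : Fin 2 → ℝ => f (x 0) (x 1)) (Set.univ.pi (pick 0 s t))) :
    ∫ x in Set.univ.pi (pick 0 s t), f (x 0) (x 1) = ∫ u in s, ∫ v in t, f u v := by
  have e := (MeasurableEquiv.finTwoArrow : (Fin 2 → ℝ) ≃ᵐ ℝ × ℝ)
  have hpre := preimage_finTwoArrow 0 s t
  simp only [pick_self] at hpre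
  have hp1 : pick (0 : Fin 2) s t 1 = t := by simp [pick]
  rw [hp1] at hpre
  have key := (volume_preserving_finTwoArrow ℝ).setIntegral_preimage_emb
    (MeasurableEquiv.finTwoArrow).measurableEmbedding (fun p : ℝ × ℝ => f p.1 p.2) (s ×ˢ t)
  rw [hpre] at key
  have happ : ∀ x : Fin 2 → ℝ,
      (fun p : ℝ × ℝ => f p.1 p.2) ((MeasurableEquiv.finTwoArrow : (Fin 2 → ℝ) ≃ᵐ ℝ × ℝ) x)
        = f (x 0) (x 1) := by
    intro x; simp [MeasurableEquiv.finTwoArrow]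
  simp only [happ] at key
  rw [key]
  rw [show ((volume : Measure (ℝ × ℝ))) = (volume : Measure ℝ).prod volume from Measure.volume_eq_prod ℝ ℝ]
  apply setIntegral_prod
  -- integrability on product
  have hmap : (volume : Measure (ℝ × ℝ)).restrict (s ×ˢ t)
      = Measure.map (MeasurableEquiv.finTwoArrow : (Fin 2 → ℝ) ≃ᵐ ℝ × ℝ)
          ((volume : Measure (Fin 2 → ℝ)).restrict (Set.univ.pi (pick 0 s t))) := by
    rw [← hpre, ← Measure.restrict_map (MeasurableEquiv.finTwoArrow).measurable (hs.prod ht),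
      (volume_preserving_finTwoArrow ℝ).map_eq]
  rw [IntegrableOn, ← Measure.volume_eq_prod, hmap,
    (MeasurableEquiv.finTwoArrow).measurableEmbedding.integrable_map_iff]
  exact hf.congr_fun (fun x _ => (happ x).symm) (measurableSet_pi_pick 0 hs ht)



lemma integrableOn_prod_zero (s t : Set ℝ) (hs : MeasurableSet s) (ht : MeasurableSet t)
    (f : ℝ → ℝ → ℝ)
    (hf : IntegrableOn (fun x : Fin 2 → ℝ => f (x 0) (x 1)) (Set.univ.pi (pick 0 s t))) :
    IntegrableOn (fun p : ℝ × ℝ => f p.1 p.2) (s ×ˢ t) := by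
  have hpre := preimage_finTwoArrow 0 s t
  have hp1 : pick (0 : Fin 2) s t 1 = t := by simp [pick]
  rw [pick_self, hp1] at hpre
  have happ : ∀ x : Fin 2 → ℝ,
      (fun p : ℝ × ℝ => f p.1 p.2) ((MeasurableEquiv.finTwoArrow : (Fin 2 → ℝ) ≃ᵐ ℝ × ℝ) x)
        = f (x 0) (x 1) := by
    intro x; simp [MeasurableEquiv.finTwoArrow]
  have hmap : (volume : Measure (ℝ × ℝ)).restrict (s ×ˢ t)
      = Measure.map (MeasurableEquiv.finTwoArrow : (Fin 2 → ℝ) ≃ᵐ ℝ × ℝ)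
          ((volume : Measure (Fin 2 → ℝ)).restrict (Set.univ.pi (pick 0 s t))) := by
    rw [← hpre, ← Measure.restrict_map (MeasurableEquiv.finTwoArrow).measurable (hs.prod ht),
      (volume_preserving_finTwoArrow ℝ).map_eq]
  rw [IntegrableOn, hmap,
    (MeasurableEquiv.finTwoArrow).measurableEmbedding.integrable_map_iff]
  exact hf.congr_fun (fun x _ => (happ x).symm) (measurableSet_pi_pick 0 hs ht)

lemma integrableOn_prod_of_pick (i : Fin 2) (s t : Set ℝ) (hs : MeasurableSet s)
    (ht : MeasurableSet t) (f : ℝ → ℝ → ℝ)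
    (hf : IntegrableOn (fun x : Fin 2 → ℝ => f (x i) (x (other i)))
      (Set.univ.pi (pick i s t))) :
    IntegrableOn (fun p : ℝ × ℝ => f p.1 p.2) (s ×ˢ t) := by
  rcases fin2_cases i with rfl | rfl
  · exact integrableOn_prod_zero s t hs ht f hf
  · have h1 : pick (1 : Fin 2) s t = pick 0 t s := pick_swap 1 s t
    rw [h1] at hf
    have := integrableOn_prod_zero t s ht hs (fun u v => f v u) hf
    rw [IntegrableOn, Measure.volume_eq_prod, ← Measure.prod_restrict] at this ⊢
    exact this.swap

lemma swap_aux (s t : Set ℝ) (f : ℝ → ℝ → ℝ)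
    (hI : IntegrableOn (fun p : ℝ × ℝ => f p.1 p.2) (s ×ˢ t)) :
    ∫ u in s, ∫ v in t, f u v = ∫ v in t, ∫ u in s, f u v := by
  apply integral_integral_swap
  rw [Measure.prod_restrict, ← Measure.volume_eq_prod]
  exact hI

lemma integral_pick (i : Fin 2) (s t : Set ℝ) (hs : MeasurableSet s) (ht : MeasurableSet t)
    (f : ℝ → ℝ → ℝ)
    (hf : IntegrableOn (fun x : Fin 2 → ℝ => f (x i) (x (other i)))
      (Set.univ.pi (pick i s t))) :
    ∫ x in Set.univ.pi (pick i s t), f (x i) (x (other i)) = ∫ u in s, ∫ v in t, f u v := by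
  rcases fin2_cases i with rfl | rfl
  · exact integral_pick_zero s t hs ht f hf
  · have h1 : pick (1 : Fin 2) s t = pick 0 t s := pick_swap 1 s t
    rw [h1] at hf ⊢
    have hf' : IntegrableOn (fun x : Fin 2 → ℝ => (fun u v => f v u) (x 0) (x 1))
        (Set.univ.pi (pick 0 t s)) := hf
    have h0 : ∫ x in Set.univ.pi (pick 0 t s), f (x 1) (x 0) = ∫ u in t, ∫ v in s, f v u :=
      integral_pick_zero t s ht hs (fun u v => f v u) hf'
    have hsw : ∫ u in t, ∫ v in s, f v u = ∫ v in s, ∫ u in t, f v u :=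
      swap_aux t s (fun u v => f v u)
        (integrableOn_prod_zero t s ht hs (fun u v => f v u) hf')
    show ∫ x in Set.univ.pi (pick 0 t s), f (x 1) (x 0) = ∫ u in s, ∫ v in t, f u v
    rw [h0]
    exact hsw

lemma integral_pick_rev (i : Fin 2) (s t : Set ℝ) (hs : MeasurableSet s) (ht : MeasurableSet t)
    (f : ℝ → ℝ → ℝ)
    (hf : IntegrableOn (fun x : Fin 2 → ℝ => f (x i) (x (other i)))
      (Set.univ.pi (pick i s t))) :
    ∫ x in Set.univ.pi (pick i s t), f (x i) (x (other i)) = ∫ v in t, ∫ u in s, f u v := by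
  rw [integral_pick i s t hs ht f hf]
  exact swap_aux s t f (integrableOn_prod_of_pick i s t hs ht f hf)



noncomputable def Di (i : Fin 2) (w : (Fin 2 → ℝ) → ℝ) (y : Fin 2 → ℝ) : ℝ :=
  fderiv ℝ w y (Pi.single i 1)

variable {w : (Fin 2 → ℝ) → ℝ}

lemma hasDerivAt_curve (i : Fin 2) (X : Fin 2 → ℝ) (t : ℝ) :
    HasDerivAt (fun s : ℝ => Function.update X i s) (Pi.single i 1) t := by
  have heq : (fun s : ℝ => Function.update X i s)
      = fun s => X + (s - X i) • (Pi.single i 1 : Fin 2 → ℝ) := by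
    funext s j
    by_cases hji : j = i
    · subst hji
      simp [Function.update_self, Pi.single_eq_same]
    · simp [Function.update_of_ne hji, Pi.single_eq_of_ne hji]
  rw [heq]
  have h1 : HasDerivAt (fun s : ℝ => s - X i) 1 t := (hasDerivAt_id t).sub_const (X i)
  have h2 := h1.smul_const (Pi.single i 1 : Fin 2 → ℝ)
  simpa using h2.const_add X

lemma hasDerivAt_slice (hw : ContDiff ℝ 1 w) (i : Fin 2) (X : Fin 2 → ℝ) (t : ℝ) :
    HasDerivAt (fun s => w (Function.update X i s)) (Di i w (Function.update X i t)) t := by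
  have hc := hasDerivAt_curve i X t
  have hfd := (hw.differentiable one_ne_zero (Function.update X i t)).hasFDerivAt
  exact hfd.comp_hasDerivAt t hc

lemma pderiv_eq (hw : ContDiff ℝ 1 w) (i : Fin 2) (x : Fin 2 → ℝ) :
    pderivI 2 i w x = Di i w x := by
  have h := hasDerivAt_slice hw i x (x i)
  rw [Function.update_eq_self] at h
  exact h.deriv

lemma continuous_Di (hw : ContDiff ℝ 1 w) (i : Fin 2) : Continuous (Di i w) := by
  exact (hw.continuous_fderiv one_ne_zero).clm_apply continuous_const

lemma Di_zero_outside (hw0 : ∀ x, x ∉ unitCube 2 → w x = 0) (i : Fin 2)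
    (y : Fin 2 → ℝ) (j : Fin 2) (hj : y j < 0 ∨ 1 < y j) : Di i w y = 0 := by
  have hev : w =ᶠ[nhds y] (fun _ => (0 : ℝ)) := by
    rcases hj with hj | hj
    · have hU : IsOpen {z : Fin 2 → ℝ | z j < 0} :=
        isOpen_lt (continuous_apply j) continuous_const
      filter_upwards [hU.mem_nhds hj] with z hz
      exact hw0 z (fun hz' => absurd (hz' j).1 (not_lt.2 (le_of_lt hz)))
    · have hU : IsOpen {z : Fin 2 → ℝ | 1 < z j} :=
        isOpen_lt continuous_const (continuous_apply j)
      filter_upwards [hU.mem_nhds hj] with z hz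
      exact hw0 z (fun hz' => absurd (hz' j).2 (not_lt.2 (le_of_lt hz)))
  rw [Di, hev.fderiv_eq, fderiv_const_apply]
  simp

lemma exists_bound (hw : ContDiff ℝ 1 w) (hw0 : ∀ x, x ∉ unitCube 2 → w x = 0) (i : Fin 2) :
    ∃ M : ℝ, 0 ≤ M ∧ ∀ y, |Di i w y| ≤ M := by
  have hK : IsCompact (Set.univ.pi fun _ : Fin 2 => Icc (0:ℝ) 1) :=
    isCompact_univ_pi (fun _ => isCompact_Icc)
  obtain ⟨C, hC⟩ := hK.exists_bound_of_continuousOn (continuous_Di hw i).continuousOn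
  refine ⟨max C 0, le_max_right _ _, fun y => ?_⟩
  by_cases hy : y ∈ Set.univ.pi fun _ : Fin 2 => Icc (0:ℝ) 1
  · exact le_trans (hC y hy) (le_max_left _ _)
  · rw [Set.mem_univ_pi] at hy
    push_neg at hy
    obtain ⟨j, hj⟩ := hy
    rw [Set.mem_Icc] at hj
    push_neg at hj
    have : y j < 0 ∨ 1 < y j := by
      by_cases h0 : 0 ≤ y j
      · exact Or.inr (hj h0)
      · exact Or.inl (lt_of_not_ge h0)
    rw [Di_zero_outside hw0 i y j this]
    simp [le_max_right]

-- hat function lemmas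
lemma hat_nonneg (h : ℝ) (j : ℕ) (t : ℝ) : 0 ≤ hatFn h j t := le_max_left _ _

lemma hat_zero_of_ne {h : ℝ} (hh : 0 < h) {b j : ℕ} {t : ℝ}
    (ht : t ∈ Icc ((b:ℝ)*h) (((b:ℝ)+1)*h)) (hj1 : j ≠ b) (hj2 : j ≠ b+1) :
    hatFn h j t = 0 := by
  have hd1 : (b:ℝ) ≤ t / h := (le_div_iff₀ hh).2 ht.1
  have hd2 : t / h ≤ (b:ℝ)+1 := (div_le_iff₀ hh).2 ht.2
  have habs : 1 ≤ |t / h - (j:ℝ)| := by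
    rcases (by omega : j + 1 ≤ b ∨ b + 2 ≤ j) with hc | hc
    · have : (j:ℝ) + 1 ≤ b := by exact_mod_cast Nat.cast_le.2 hc
      exact le_abs.2 (Or.inl (by linarith))
    · have : (b:ℝ) + 2 ≤ j := by exact_mod_cast Nat.cast_le.2 hc
      exact le_abs.2 (Or.inr (by linarith))
  exact max_eq_left (by linarith)

lemma hat_hasDerivAt {h : ℝ} (hh : 0 < h) (a j : ℕ) {t : ℝ}
    (ht : t ∈ Ioo ((a:ℝ)*h) (((a:ℝ)+1)*h)) :
    HasDerivAt (hatFn h j)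
      (if j = a then -h⁻¹ else if j = a+1 then h⁻¹ else 0) t := by
  have hIoo : Ioo ((a:ℝ)*h) (((a:ℝ)+1)*h) ∈ nhds t := isOpen_Ioo.mem_nhds ht
  by_cases hja : j = a
  · subst hja
    rw [if_pos rfl]
    have haff : HasDerivAt (fun s : ℝ => 1 + (j:ℝ) - s * h⁻¹) (-h⁻¹) t := by
      simpa using ((hasDerivAt_id t).mul_const h⁻¹).const_sub (1 + (j:ℝ))
    apply haff.congr_of_eventuallyEq
    filter_upwards [hIoo] with s hs
    have h1 : (j:ℝ) < s / h := (lt_div_iff₀ hh).2 hs.1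
    have h2 : s / h < (j:ℝ) + 1 := (div_lt_iff₀ hh).2 hs.2
    have habs : |s / h - (j:ℝ)| = s / h - j := abs_of_pos (by linarith)
    rw [hatFn, habs, max_eq_right (by linarith)]
    rw [div_eq_mul_inv]; ring
  · by_cases hja1 : j = a+1
    · subst hja1
      rw [if_neg hja, if_pos rfl]
      have haff : HasDerivAt (fun s : ℝ => s * h⁻¹ - (a:ℝ)) h⁻¹ t := by
        simpa using ((hasDerivAt_id t).mul_const h⁻¹).sub_const (a:ℝ)
      apply haff.congr_of_eventuallyEq
      filter_upwards [hIoo] with s hs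
      have h1 : (a:ℝ) < s / h := (lt_div_iff₀ hh).2 hs.1
      have h2 : s / h < (a:ℝ) + 1 := (div_lt_iff₀ hh).2 hs.2
      have habs : |s / h - ((a:ℝ)+1)| = ((a:ℝ)+1) - s/h := by
        rw [abs_of_nonpos (by linarith)]; ring
      rw [hatFn]
      push_cast
      rw [habs, max_eq_right (by linarith)]
      rw [div_eq_mul_inv]; ring
    · rw [if_neg hja, if_neg hja1]
      apply (hasDerivAt_const t (0:ℝ)).congr_of_eventuallyEq
      filter_upwards [hIoo] with s hs
      exact hat_zero_of_ne hh (Ioo_subset_Icc_self hs) hja hja1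



noncomputable def Wz (N : ℕ) (w : (Fin 2 → ℝ) → ℝ) (v : Fin 2 → ℕ) : ℝ :=
  if v ∈ Finset.Icc (fun _ => (1:ℕ)) (fun _ => N - 1) then nodalW 2 ((N:ℝ)⁻¹) v w else 0

lemma mem_IccF_iff {N : ℕ} {v : Fin 2 → ℕ} :
    v ∈ Finset.Icc (fun _ => (1:ℕ)) (fun _ => N - 1) ↔ ∀ j, 1 ≤ v j ∧ v j ≤ N - 1 := by
  rw [Finset.mem_Icc]
  constructor
  · intro ⟨h1, h2⟩ j; exact ⟨h1 j, h2 j⟩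
  · intro h; exact ⟨fun j => (h j).1, fun j => (h j).2⟩

lemma eq_pick_iff {i : Fin 2} {k' : Fin 2 → ℕ} {p q : ℕ} :
    k' = pick i p q ↔ (k' i = p ∧ k' (other i) = q) := by
  constructor
  · rintro rfl; exact ⟨pick_self i p q, pick_other i p q⟩
  · rintro ⟨h1, h2⟩
    funext j
    rcases eq_or_eq_other i j with rfl | rfl
    · rw [h1, pick_self]
    · rw [h2, pick_other]

lemma lam_update (i : Fin 2) (h : ℝ) (k' : Fin 2 → ℕ) (x : Fin 2 → ℝ) (t : ℝ) :
    LamFn 2 h k' (Function.update x i t)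
      = hatFn h (k' i) t * hatFn h (k' (other i)) (x (other i)) := by
  rcases fin2_cases i with rfl | rfl
  · show (∏ j, hatFn h (k' j) (Function.update x 0 t j)) = _
    rw [Fin.prod_univ_two]
    have h0 : Function.update x 0 t 0 = t := Function.update_self 0 t x
    have h1 : Function.update x 0 t 1 = x 1 := Function.update_of_ne (by decide) t x
    rw [h0, h1]
    rfl
  · show (∏ j, hatFn h (k' j) (Function.update x 1 t j)) = _
    rw [Fin.prod_univ_two]
    have h0 : Function.update x 1 t 0 = x 0 := Function.update_of_ne (by decide) t x
    have h1 : Function.update x 1 t 1 = t := Function.update_self 1 t x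
    rw [h0, h1]
    exact mul_comm _ _

theorem pderiv_interp (N : ℕ) (hN : 2 ≤ N) (w : (Fin 2 → ℝ) → ℝ) (i : Fin 2)
    (k : Fin 2 → ℕ) (x : Fin 2 → ℝ)
    (hxi : x i ∈ Ioo ((k i : ℝ) * (N:ℝ)⁻¹) (((k i : ℝ)+1) * (N:ℝ)⁻¹))
    (hxo : x (other i) ∈ Icc ((k (other i) : ℝ) * (N:ℝ)⁻¹)
      (((k (other i):ℝ)+1) * (N:ℝ)⁻¹)) :
    pderivI 2 i (interpQ 2 N w) x =
      (N:ℝ) * ((Wz N w (pick i (k i+1) (k (other i))) - Wz N w (pick i (k i) (k (other i))))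
          * hatFn ((N:ℝ)⁻¹) (k (other i)) (x (other i))
        + (Wz N w (pick i (k i+1) (k (other i)+1)) - Wz N w (pick i (k i) (k (other i)+1)))
          * hatFn ((N:ℝ)⁻¹) (k (other i)+1) (x (other i))) := by
  have hNpos : (0:ℝ) < N := by positivity
  set h : ℝ := (N:ℝ)⁻¹ with hdef
  have hh : 0 < h := by positivity
  set a := k i
  set b := k (other i)
  set H : ℕ → ℝ := fun j => hatFn h j (x (other i)) with Hdef
  set W : (Fin 2 → ℕ) → ℝ := fun v => nodalW 2 h v w with Wdef
  set dd : ℕ → ℝ := fun j => if j = a then -h⁻¹ else if j = a+1 then h⁻¹ else 0 with dddef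
  set F : Finset (Fin 2 → ℕ) := Finset.Icc (fun _ => (1:ℕ)) (fun _ => N - 1) with Fdef
  -- Step B: derivative of the slice
  have hder : HasDerivAt (fun t => interpQ 2 N w (Function.update x i t))
      (∑ k' ∈ F, W k' * (dd (k' i) * H (k' (other i)))) (x i) := by
    have : (fun t => interpQ 2 N w (Function.update x i t))
        = fun t => ∑ k' ∈ F, W k' * (hatFn h (k' i) t * H (k' (other i))) := by
      funext t
      simp only [interpQ, ← hdef, lam_update i h _ x t]
      rfl
    rw [this]
    apply HasDerivAt.fun_sum
    intro k' _
    exact ((hat_hasDerivAt hh a (k' i) hxi).mul_const (H (k' (other i)))).const_mul (W k')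
  have hpd : pderivI 2 i (interpQ 2 N w) x = ∑ k' ∈ F, W k' * (dd (k' i) * H (k' (other i))) :=
    hder.deriv
  rw [hpd]
  -- Step C: per-term rewrite
  have claim : ∀ k' ∈ F, W k' * (dd (k' i) * H (k' (other i))) =
      h⁻¹ * (((if k' = pick i (a+1) b then W k' * H b else 0)
              - (if k' = pick i a b then W k' * H b else 0))
           + ((if k' = pick i (a+1) (b+1) then W k' * H (b+1) else 0)
              - (if k' = pick i a (b+1) then W k' * H (b+1) else 0))) := by
    intro k' _
    have hne : a ≠ a + 1 := by omega
    by_cases h1 : k' i = a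
    · have hd : dd (k' i) = -h⁻¹ := by rw [dddef]; simp [h1]
      have hn1 : k' ≠ pick i (a+1) b := fun hc => hne.symm (by rw [← (eq_pick_iff.1 hc).1, h1])
      have hn2 : k' ≠ pick i (a+1) (b+1) := fun hc => hne.symm (by rw [← (eq_pick_iff.1 hc).1, h1])
      by_cases h2 : k' (other i) = b
      · have he : k' = pick i a b := eq_pick_iff.2 ⟨h1, h2⟩
        have hn3 : k' ≠ pick i a (b+1) := fun hc => by
          have := (eq_pick_iff.1 hc).2; omega
        rw [hd, if_neg hn1, if_pos he, if_neg hn2, if_neg hn3, h2]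
        ring
      · by_cases h3 : k' (other i) = b + 1
        · have he : k' = pick i a (b+1) := eq_pick_iff.2 ⟨h1, h3⟩
          have hn3 : k' ≠ pick i a b := fun hc => by
            have := (eq_pick_iff.1 hc).2; omega
          rw [hd, if_neg hn1, if_neg hn3, if_neg hn2, if_pos he, h3]
          ring
        · have hH : H (k' (other i)) = 0 := hat_zero_of_ne hh hxo h2 h3
          have hn3 : k' ≠ pick i a b := fun hc => h2 (eq_pick_iff.1 hc).2
          have hn4 : k' ≠ pick i a (b+1) := fun hc => h3 (eq_pick_iff.1 hc).2
          rw [hH, if_neg hn1, if_neg hn3, if_neg hn2, if_neg hn4]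
          ring
    · by_cases h1' : k' i = a + 1
      · have hd : dd (k' i) = h⁻¹ := by rw [dddef]; simp [h1, h1']
        have hn1 : k' ≠ pick i a b := fun hc => h1 (eq_pick_iff.1 hc).1
        have hn2 : k' ≠ pick i a (b+1) := fun hc => h1 (eq_pick_iff.1 hc).1
        by_cases h2 : k' (other i) = b
        · have he : k' = pick i (a+1) b := eq_pick_iff.2 ⟨h1', h2⟩
          have hn3 : k' ≠ pick i (a+1) (b+1) := fun hc => by
            have := (eq_pick_iff.1 hc).2; omega
          rw [hd, if_pos he, if_neg hn1, if_neg hn3, if_neg hn2, h2]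
          ring
        · by_cases h3 : k' (other i) = b + 1
          · have he : k' = pick i (a+1) (b+1) := eq_pick_iff.2 ⟨h1', h3⟩
            have hn3 : k' ≠ pick i (a+1) b := fun hc => by
              have := (eq_pick_iff.1 hc).2; omega
            rw [hd, if_neg hn3, if_neg hn1, if_pos he, if_neg hn2, h3]
            ring
          · have hH : H (k' (other i)) = 0 := hat_zero_of_ne hh hxo h2 h3
            have hn3 : k' ≠ pick i (a+1) b := fun hc => h2 (eq_pick_iff.1 hc).2
            have hn4 : k' ≠ pick i (a+1) (b+1) := fun hc => h3 (eq_pick_iff.1 hc).2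
            rw [hH, if_neg hn3, if_neg hn1, if_neg hn4, if_neg hn2]
            ring
      · have hd : dd (k' i) = 0 := by rw [dddef]; simp [h1, h1']
        have hn1 : k' ≠ pick i a b := fun hc => h1 (eq_pick_iff.1 hc).1
        have hn2 : k' ≠ pick i a (b+1) := fun hc => h1 (eq_pick_iff.1 hc).1
        have hn3 : k' ≠ pick i (a+1) b := fun hc => h1' (eq_pick_iff.1 hc).1
        have hn4 : k' ≠ pick i (a+1) (b+1) := fun hc => h1' (eq_pick_iff.1 hc).1
        rw [hd, if_neg hn3, if_neg hn1, if_neg hn4, if_neg hn2]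
        ring
  rw [Finset.sum_congr rfl claim]
  rw [← Finset.mul_sum]
  have hsplit : ∑ k' ∈ F,
      (((if k' = pick i (a+1) b then W k' * H b else 0)
              - (if k' = pick i a b then W k' * H b else 0))
           + ((if k' = pick i (a+1) (b+1) then W k' * H (b+1) else 0)
              - (if k' = pick i a (b+1) then W k' * H (b+1) else 0)))
      = ((Wz N w (pick i (a+1) b) - Wz N w (pick i a b)) * H b
        + (Wz N w (pick i (a+1) (b+1)) - Wz N w (pick i a (b+1))) * H (b+1)) := by
    rw [Finset.sum_add_distrib, Finset.sum_sub_distrib, Finset.sum_sub_distrib]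
    rw [Finset.sum_ite_eq' F (pick i (a+1) b), Finset.sum_ite_eq' F (pick i a b),
      Finset.sum_ite_eq' F (pick i (a+1) (b+1)), Finset.sum_ite_eq' F (pick i a (b+1))]
    have hWz : ∀ v : Fin 2 → ℕ, ∀ m : ℕ,
        (if v ∈ F then W v * H m else 0) = Wz N w v * H m := by
      intro v m
      rw [Wz, ← Fdef]
      split_ifs <;> simp [Wdef, hdef]
    rw [hWz, hWz, hWz, hWz]
    ring
  rw [hsplit]
  have hhinv : h⁻¹ = (N:ℝ) := by rw [hdef, inv_inv]
  rw [hhinv]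


-- new material
def cubeI (c h' : ℝ) : Set ℝ := Ioo (c - h'/2) (c + h'/2)

lemma nodeCube_eq (i : Fin 2) (h' : ℝ) (v : Fin 2 → ℕ) :
    nodeCube 2 h' v
      = Set.univ.pi (pick i (cubeI (h' * v i) h') (cubeI (h' * (v (other i))) h')) := by
  ext x
  rw [Set.mem_univ_pi]
  constructor
  · intro hx j
    have hj := abs_lt.1 (hx j)
    rcases eq_or_eq_other i j with h | h
    · rw [h] at hj
      rw [h, pick_self]
      exact ⟨by linarith [hj.1], by linarith [hj.2]⟩
    · rw [h] at hj
      rw [h, pick_other]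
      exact ⟨by linarith [hj.1], by linarith [hj.2]⟩
  · intro hx j
    have hj := hx j
    rw [abs_lt]
    rcases eq_or_eq_other i j with h | h
    · rw [h, pick_self] at hj
      rw [h]
      exact ⟨by linarith [hj.1], by linarith [hj.2]⟩
    · rw [h, pick_other] at hj
      rw [h]
      exact ⟨by linarith [hj.1], by linarith [hj.2]⟩

lemma volume_pick (i : Fin 2) (s t : Set ℝ) (hs : MeasurableSet s) (ht : MeasurableSet t) :
    volume (Set.univ.pi (pick i s t)) = volume s * volume t := by
  rw [volume_pi_pi]
  rcases fin2_cases i with rfl | rfl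
  · rw [Fin.prod_univ_two]
    have h0 : pick (0:Fin 2) s t 0 = s := pick_self 0 s t
    have h1 : pick (0:Fin 2) s t 1 = t := by simp [pick]
    rw [h0, h1]
  · rw [Fin.prod_univ_two]
    have h0 : pick (1:Fin 2) s t 0 = t := by simp [pick]
    have h1 : pick (1:Fin 2) s t 1 = s := pick_self 1 s t
    rw [h0, h1, mul_comm]

lemma pi_pick_subset (i : Fin 2) {s t s' t' : Set ℝ} (hs : s ⊆ s') (ht : t ⊆ t') :
    Set.univ.pi (pick i s t) ⊆ Set.univ.pi (pick i s' t') := by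
  intro x hx
  rw [Set.mem_univ_pi] at hx ⊢
  intro j
  have hj := hx j
  rcases eq_or_eq_other i j with h | h
  · rw [h, pick_self] at hj
    rw [h, pick_self]
    exact hs hj
  · rw [h, pick_other] at hj
    rw [h, pick_other]
    exact ht hj

lemma integrableOn_pi_pick (i : Fin 2) {g : (Fin 2 → ℝ) → ℝ} (hg : Continuous g)
    {s t : Set ℝ} {p q r u : ℝ} (hs : s ⊆ Icc p q) (ht : t ⊆ Icc r u) :
    IntegrableOn g (Set.univ.pi (pick i s t)) := by
  have hK : IsCompact (Set.univ.pi (pick i (Icc p q) (Icc r u))) := by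
    apply isCompact_univ_pi
    intro j
    rcases eq_or_eq_other i j with rfl | rfl <;> simp [isCompact_Icc]
  exact (hg.continuousOn.integrableOn_compact hK).mono_set (pi_pick_subset i hs ht)

lemma setIntegral_Ioo_comp_add (g : ℝ → ℝ) {p q : ℝ} (hpq : p ≤ q) (δ : ℝ) :
    ∫ u in Ioo p q, g (u + δ) = ∫ u in Ioo (p + δ) (q + δ), g u := by
  rw [setIntegral_congr_set Ioo_ae_eq_Ioc, setIntegral_congr_set Ioo_ae_eq_Ioc,
    ← intervalIntegral.integral_of_le hpq, ← intervalIntegral.integral_of_le (by linarith),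
    intervalIntegral.integral_comp_add_right]

lemma continuous_pick_left (i : Fin 2) (v : ℝ) : Continuous fun t : ℝ => (pick i t v : Fin 2 → ℝ) := by
  apply continuous_pi
  intro j
  by_cases hji : j = i
  · subst hji
    simpa [pick] using continuous_id'
  · simp only [pick, if_neg hji]
    exact continuous_const

lemma continuous_pick_right (i : Fin 2) (u : ℝ) : Continuous fun v : ℝ => (pick i u v : Fin 2 → ℝ) := by
  apply continuous_pi
  intro j
  by_cases hji : j = i
  · subst hji
    simpa [pick] using continuous_const
  · simp only [pick, if_neg hji]
    exact continuous_id

lemma continuous_param_left (i : Fin 2) {q : (Fin 2 → ℝ) → ℝ} (hq : Continuous q)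
    {M : ℝ} (hM : ∀ y, |q y| ≤ M) {S : Set ℝ} (hSfin : volume S ≠ ⊤) :
    Continuous fun v : ℝ => ∫ t in S, q (pick i t v) := by
  apply continuous_of_dominated (bound := fun _ => M)
  · intro v
    exact ((hq.comp (continuous_pick_left i v)).aestronglyMeasurable)
  · intro v
    filter_upwards with t
    rw [Real.norm_eq_abs]
    exact hM _
  · rw [integrable_const_iff]
    right
    refine ⟨?_⟩; rw [Measure.restrict_apply_univ]
    exact hSfin.lt_top
  · filter_upwards with t
    exact hq.comp (continuous_pick_right i t)

lemma continuous_param_right (i : Fin 2) {q : (Fin 2 → ℝ) → ℝ} (hq : Continuous q)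
    {M : ℝ} (hM : ∀ y, |q y| ≤ M) {S : Set ℝ} (hSfin : volume S ≠ ⊤) :
    Continuous fun u : ℝ => ∫ v in S, q (pick i u v) := by
  apply continuous_of_dominated (bound := fun _ => M)
  · intro u
    exact ((hq.comp (continuous_pick_right i u)).aestronglyMeasurable)
  · intro u
    filter_upwards with v
    rw [Real.norm_eq_abs]
    exact hM _
  · rw [integrable_const_iff]
    right
    refine ⟨?_⟩; rw [Measure.restrict_apply_univ]
    exact hSfin.lt_top
  · filter_upwards with v
    exact hq.comp (continuous_pick_left i v)

lemma exists_bound_w {w : (Fin 2 → ℝ) → ℝ} (hw : ContDiff ℝ 1 w)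
    (hw0 : ∀ x, x ∉ unitCube 2 → w x = 0) :
    ∃ M : ℝ, 0 ≤ M ∧ ∀ y, |w y| ≤ M := by
  have hK : IsCompact (Set.univ.pi fun _ : Fin 2 => Icc (0:ℝ) 1) :=
    isCompact_univ_pi (fun _ => isCompact_Icc)
  obtain ⟨C, hC⟩ := hK.exists_bound_of_continuousOn hw.continuous.continuousOn
  refine ⟨max C 0, le_max_right _ _, fun y => ?_⟩
  by_cases hy : y ∈ Set.univ.pi fun _ : Fin 2 => Icc (0:ℝ) 1
  · exact le_trans (hC y hy) (le_max_left _ _)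
  · rw [hw0 y (fun hy' => hy (fun j _ => ⟨le_of_lt (hy' j).1, le_of_lt (hy' j).2⟩))]
    simp [le_max_right]

lemma update_pick (i : Fin 2) (u v s : ℝ) :
    Function.update (pick i u v : Fin 2 → ℝ) i s = pick i s v := by
  funext j
  rcases eq_or_eq_other i j with rfl | rfl
  · rw [Function.update_self, pick_self]
  · rw [Function.update_of_ne (other_ne i), pick_other, pick_other]



theorem diff_bound (N : ℕ) (hN : 2 ≤ N) (w : (Fin 2 → ℝ) → ℝ) (hw : ContDiff ℝ 1 w)
    (hw0 : ∀ x, x ∉ unitCube 2 → w x = 0) (i : Fin 2) (a b : ℕ)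
    (ha : a + 1 ≤ N) (hb1 : 1 ≤ b) (hb2 : b + 1 ≤ N) :
    |Wz N w (pick i (a+1) b) - Wz N w (pick i a b)| ≤
      (N:ℝ) * ∫ x in Set.univ.pi (pick i
        (Icc (max 0 ((if a = 0 then -(N:ℝ)⁻¹ else (N:ℝ)⁻¹ * (a:ℝ)) - (N:ℝ)⁻¹/2))
             (min 1 ((if a + 1 = N then (N:ℝ)⁻¹ * ((N:ℝ)+1) else (N:ℝ)⁻¹ * ((a:ℝ)+1)) + (N:ℝ)⁻¹/2)))
        (cubeI ((N:ℝ)⁻¹ * (b:ℝ)) ((N:ℝ)⁻¹))), |Di i w x| := by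
  have hN0 : (0:ℝ) < N := by
    have : (2:ℝ) ≤ N := by exact_mod_cast hN
    linarith
  have hNne : (N:ℝ) ≠ 0 := ne_of_gt hN0
  set h : ℝ := (N:ℝ)⁻¹ with hdef
  have hh : 0 < h := by positivity
  have hhN : h * N = 1 := inv_mul_cancel₀ hNne
  set c₀ : ℝ := if a = 0 then -h else h * (a:ℝ) with hc0
  set c₁ : ℝ := if a + 1 = N then h * ((N:ℝ)+1) else h * ((a:ℝ)+1) with hc1
  set δ : ℝ := c₁ - c₀ with hδdef
  set strip : Set ℝ := cubeI (h * (b:ℝ)) h with hstrip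
  set J : Set ℝ := Icc (max 0 (c₀ - h/2)) (min 1 (c₁ + h/2)) with hJ
  have hδcases : δ = 2*h ∨ δ = h := by
    rw [hδdef, hc0, hc1]
    by_cases ha0 : a = 0
    · have haN : a + 1 ≠ N := by omega
      rw [if_pos ha0, if_neg haN, ha0]
      left; push_cast; ring
    · by_cases haN : a + 1 = N
      · rw [if_neg ha0, if_pos haN]
        have : (N:ℝ) = (a:ℝ) + 1 := by exact_mod_cast haN.symm
        rw [this]
        left; ring
      · rw [if_neg ha0, if_neg haN]
        right; ring
  have hδpos : 0 < δ := by rcases hδcases with hc | hc <;> rw [hc] <;> linarith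
  have hδle : δ ≤ 2*h := by rcases hδcases with hc | hc <;> rw [hc] <;> linarith
  have hwc := hw.continuous
  obtain ⟨Mw, hMw0, hMw⟩ := exists_bound_w hw hw0
  obtain ⟨M, hM0, hM⟩ := exists_bound hw hw0 i
  have hstripM : MeasurableSet strip := measurableSet_Ioo
  have hstripfin : volume strip ≠ ⊤ := by
    rw [hstrip, cubeI, Real.volume_Ioo]
    exact ENNReal.ofReal_ne_top
  have hJM : MeasurableSet J := measurableSet_Icc
  have hJfin : volume J ≠ ⊤ := by
    rw [hJ, Real.volume_Icc]
    exact ENNReal.ofReal_ne_top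
  -- subsets into compacts for integrability
  have hstripIcc : strip ⊆ Icc (h*(b:ℝ) - h/2) (h*(b:ℝ) + h/2) := Ioo_subset_Icc_self
  set g : ℝ → ℝ := fun u => ∫ v in strip, w (pick i u v) with hg
  have hgc : Continuous g := continuous_param_right i hwc hMw hstripfin
  set F : ℝ → ℝ := fun v => ∫ t in J, |Di i w (pick i t v)| with hF
  have hqc : Continuous fun y => |Di i w y| := (continuous_Di hw i).abs
  have hqM : ∀ y, |(|Di i w y|)| ≤ M := fun y => by rw [abs_abs]; exact hM y
  have hFc : Continuous F := continuous_param_left i hqc hqM hJfin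
  have mcube : ∀ c : ℝ, MeasurableSet (cubeI c h) := fun c => measurableSet_Ioo
  -- representation of cube integrals
  have hrep : ∀ c : ℝ, ∫ x in Set.univ.pi (pick i (cubeI c h) strip), w x
      = ∫ u in cubeI c h, g u := by
    intro c
    have hfeq : (fun x : Fin 2 → ℝ => w (pick i (x i) (x (other i)))) = w := by
      funext x; rw [pick_eta]
    have hint : IntegrableOn (fun x : Fin 2 → ℝ => w (pick i (x i) (x (other i))))
        (Set.univ.pi (pick i (cubeI c h) strip)) := by
      rw [hfeq]
      exact integrableOn_pi_pick i hwc (Ioo_subset_Icc_self : cubeI c h ⊆ _) hstripIcc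
    have := integral_pick i (cubeI c h) strip (mcube c) hstripM
      (fun u v => w (pick i u v)) hint
    rw [← this]
    exact setIntegral_congr_fun (measurableSet_pi_pick i (mcube c) hstripM)
      (fun x _ => (congrFun hfeq x).symm)
  -- nodal values as cube integrals
  have hvol : (volume (Set.univ.pi (pick i (cubeI (h*(a:ℝ)) h) strip))).toReal = h*h ∧
      (volume (Set.univ.pi (pick i (cubeI (h*((a:ℝ)+1)) h) strip))).toReal = h*h := by
    constructor <;>
    · rw [volume_pick i _ _ (mcube _) hstripM, cubeI, hstrip, cubeI,
        Real.volume_Ioo, Real.volume_Ioo]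
      rw [show ∀ c : ℝ, c + h/2 - (c - h/2) = h from fun c => by ring,
        show h*(b:ℝ) + h/2 - (h*(b:ℝ) - h/2) = h from by ring]
      rw [← ENNReal.ofReal_mul hh.le, ENNReal.toReal_ofReal (by positivity)]
  -- Wz at index a as cube integral
  have hW0 : Wz N w (pick i a b) = (h*h)⁻¹ * ∫ u in cubeI c₀ h, g u := by
    by_cases ha0 : a = 0
    · have hWz : Wz N w (pick i a b) = 0 := by
        rw [Wz, if_neg]
        intro hmem
        have := (mem_IccF_iff.1 hmem) i
        rw [pick_self] at this
        omega
      have hint : ∫ u in cubeI c₀ h, g u = 0 := by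
        apply setIntegral_eq_zero_of_forall_eq_zero
        intro u hu
        apply setIntegral_eq_zero_of_forall_eq_zero
        intro v hv
        apply hw0
        intro hcube
        have h1 := (hcube i).1
        rw [pick_self] at h1
        have h2 : u < c₀ + h/2 := hu.2
        rw [hc0, if_pos ha0] at h2
        linarith
      rw [hWz, hint, mul_zero]
    · have hmem : pick i a b ∈ Finset.Icc (fun _ => (1:ℕ)) (fun _ => N - 1) := by
        apply mem_IccF_iff.2
        intro j
        rcases eq_or_eq_other i j with hj | hj <;> rw [hj]
        · rw [pick_self]; omega
        · rw [pick_other]; omega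
      rw [Wz, if_pos hmem, nodalW, setAverage_eq, nodeCube_eq i, pick_self, pick_other,
        hc0, if_neg ha0]
      rw [hrep (h * (a:ℝ)), smul_eq_mul, measureReal_def, hvol.1]
  -- Wz at index a+1 as translated cube integral
  have htrans : ∫ u in cubeI c₀ h, g (u + δ) = ∫ u in cubeI c₁ h, g u := by
    rw [cubeI, cubeI, setIntegral_Ioo_comp_add g (by linarith : c₀ - h/2 ≤ c₀ + h/2) δ]
    rw [show c₀ - h/2 + δ = c₁ - h/2 from by rw [hδdef]; ring,
      show c₀ + h/2 + δ = c₁ + h/2 from by rw [hδdef]; ring]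
  have hW1 : Wz N w (pick i (a+1) b) = (h*h)⁻¹ * ∫ u in cubeI c₀ h, g (u + δ) := by
    rw [htrans]
    by_cases haN : a + 1 = N
    · have hWz : Wz N w (pick i (a+1) b) = 0 := by
        rw [Wz, if_neg]
        intro hmem
        have := (mem_IccF_iff.1 hmem) i
        rw [pick_self] at this
        omega
      have hint : ∫ u in cubeI c₁ h, g u = 0 := by
        apply setIntegral_eq_zero_of_forall_eq_zero
        intro u hu
        apply setIntegral_eq_zero_of_forall_eq_zero
        intro v hv
        apply hw0
        intro hcube
        have h1 := (hcube i).2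
        rw [pick_self] at h1
        have h2 : c₁ - h/2 < u := hu.1
        rw [hc1, if_pos haN] at h2
        have hN1 : h * ((N:ℝ)+1) = 1 + h := by
          rw [mul_add, mul_one, hhN]
        rw [hN1] at h2
        linarith
      rw [hWz, hint, mul_zero]
    · have hmem : pick i (a+1) b ∈ Finset.Icc (fun _ => (1:ℕ)) (fun _ => N - 1) := by
        apply mem_IccF_iff.2
        intro j
        rcases eq_or_eq_other i j with hj | hj <;> rw [hj]
        · rw [pick_self]; omega
        · rw [pick_other]; omega
      rw [Wz, if_pos hmem, nodalW, setAverage_eq, nodeCube_eq i, pick_self, pick_other,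
        hc1, if_neg haN]
      rw [show ((a:ℕ)+1 : ℕ) = a + 1 from rfl]
      push_cast
      rw [hrep ((h * ((a:ℝ)+1))), smul_eq_mul]
      rw [measureReal_def, show (volume (Set.univ.pi (pick i (cubeI (h*((a:ℝ)+1)) h) strip))).toReal = h*h
        from hvol.2]
  set C : ℝ := ∫ v in strip, F v with hCdef
  -- FTC pointwise bound
  have hftc : ∀ u ∈ cubeI c₀ h, ∀ v : ℝ, |w (pick i (u+δ) v) - w (pick i u v)| ≤ F v := by
    intro u hu v
    have hφ : ∀ t : ℝ, HasDerivAt (fun s => w (pick i s v)) (Di i w (pick i t v)) t := by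
      intro t
      have hs := hasDerivAt_slice hw i (pick i u v) t
      simp only [update_pick] at hs
      exact hs
    have hqvc : Continuous fun t => |Di i w (pick i t v)| :=
      ((continuous_Di hw i).comp (continuous_pick_left i v)).abs
    have hFTC : ∫ t in u..(u+δ), Di i w (pick i t v)
        = w (pick i (u+δ) v) - w (pick i u v) :=
      intervalIntegral.integral_eq_sub_of_hasDerivAt (fun t _ => hφ t)
        (((continuous_Di hw i).comp (continuous_pick_left i v)).intervalIntegrable u (u+δ))
    have hle : u ≤ u + δ := by linarith
    have hIocJ : ∫ t in Ioc u (u+δ), |Di i w (pick i t v)| ≤ F v := by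
      have hIoc : Ioc u (u+δ)
          = (Ioc u (u+δ) ∩ Icc 0 1) ∪ (Ioc u (u+δ) \ Icc (0:ℝ) 1) :=
        (Set.inter_union_diff _ _).symm
      rw [hIoc, setIntegral_union
        (Set.disjoint_sdiff_right.mono_left Set.inter_subset_right)
        (measurableSet_Ioc.diff measurableSet_Icc)
        (hqvc.integrableOn_Icc.mono_set
          ((Set.inter_subset_left).trans Ioc_subset_Icc_self))
        (hqvc.integrableOn_Icc.mono_set ((Set.diff_subset).trans Ioc_subset_Icc_self))]
      have hzero : ∫ t in Ioc u (u+δ) \ Icc (0:ℝ) 1, |Di i w (pick i t v)| = 0 := by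
        apply setIntegral_eq_zero_of_forall_eq_zero
        intro t ht
        have hout : t < 0 ∨ 1 < t := by
          rcases ht with ⟨_, hnot⟩
          rw [Set.mem_Icc] at hnot
          push_neg at hnot
          by_cases h0 : 0 ≤ t
          · exact Or.inr (hnot h0)
          · exact Or.inl (lt_of_not_ge h0)
        rw [Di_zero_outside hw0 i (pick i t v) i (by rwa [pick_self]), abs_zero]
      rw [hzero, add_zero, hF]
      apply setIntegral_mono_set hqvc.integrableOn_Icc
        (Filter.Eventually.of_forall (fun t => abs_nonneg _))
      apply HasSubset.Subset.eventuallyLE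
      rintro t ⟨⟨ht1, ht2⟩, h01, h11⟩
      constructor
      · exact max_le h01 (by linarith [hu.1])
      · apply le_min h11
        have : c₀ + h/2 + δ = c₁ + h/2 := by rw [hδdef]; ring
        linarith [hu.2]
    calc |w (pick i (u+δ) v) - w (pick i u v)|
        = |∫ t in u..(u+δ), Di i w (pick i t v)| := by rw [hFTC]
      _ ≤ ∫ t in u..(u+δ), |Di i w (pick i t v)| :=
          intervalIntegral.abs_integral_le_integral_abs hle
      _ = ∫ t in Ioc u (u+δ), |Di i w (pick i t v)| := intervalIntegral.integral_of_le hle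
      _ ≤ F v := hIocJ
  -- per-u bound on g-difference
  have hXb : ∀ u ∈ cubeI c₀ h, ‖g (u+δ) - g u‖ ≤ C := by
    intro u hu
    rw [Real.norm_eq_abs]
    have hint1 : IntegrableOn (fun v => w (pick i (u+δ) v)) strip :=
      ((hwc.comp (continuous_pick_right i (u+δ))).integrableOn_Icc).mono_set hstripIcc
    have hint2 : IntegrableOn (fun v => w (pick i u v)) strip :=
      ((hwc.comp (continuous_pick_right i u)).integrableOn_Icc).mono_set hstripIcc
    have hsub : g (u+δ) - g u
        = ∫ v in strip, (w (pick i (u+δ) v) - w (pick i u v)) :=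
      (integral_sub hint1 hint2).symm
    rw [hsub]
    have habs : |∫ v in strip, (w (pick i (u+δ) v) - w (pick i u v))|
        ≤ ∫ v in strip, |w (pick i (u+δ) v) - w (pick i u v)| := by
      have := norm_integral_le_integral_norm (μ := volume.restrict strip)
        (f := fun v => w (pick i (u+δ) v) - w (pick i u v))
      simpa [Real.norm_eq_abs] using this
    refine habs.trans ?_
    calc ∫ v in strip, |w (pick i (u+δ) v) - w (pick i u v)|
        ≤ ∫ v in strip, F v :=
          setIntegral_mono_on ((hint1.sub hint2).abs)
            (hFc.integrableOn_Icc.mono_set hstripIcc) hstripM (fun v _ => hftc u hu v)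
      _ = C := rfl
  -- main bound
  have hmain : |Wz N w (pick i (a+1) b) - Wz N w (pick i a b)| ≤ (h*h)⁻¹ * (C * h) := by
    rw [hW1, hW0, ← mul_sub]
    have hintg1 : IntegrableOn (fun u => g (u+δ)) (cubeI c₀ h) :=
      ((hgc.comp (continuous_id.add continuous_const)).integrableOn_Icc).mono_set
        Ioo_subset_Icc_self
    have hintg2 : IntegrableOn g (cubeI c₀ h) :=
      (hgc.integrableOn_Icc).mono_set Ioo_subset_Icc_self
    rw [← integral_sub hintg1 hintg2]
    rw [abs_mul, abs_of_pos (by positivity : (0:ℝ) < (h*h)⁻¹)]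
    apply mul_le_mul_of_nonneg_left _ (by positivity)
    have hfin : volume (cubeI c₀ h) < ⊤ := by
      rw [cubeI, Real.volume_Ioo]
      exact ENNReal.ofReal_lt_top
    have hb := norm_setIntegral_le_of_norm_le_const hfin hXb
    rw [Real.norm_eq_abs] at hb
    have hvolc : (volume (cubeI c₀ h)).toReal = h := by
      rw [cubeI, Real.volume_Ioo, show c₀ + h/2 - (c₀ - h/2) = h from by ring,
        ENNReal.toReal_ofReal hh.le]
    calc |∫ u in cubeI c₀ h, (g (u+δ) - g u)| ≤ C * (volume (cubeI c₀ h)).toReal := hb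
      _ = C * h := by rw [hvolc]
  -- identify C with the 2D integral
  have hCeq : C = ∫ x in Set.univ.pi (pick i J strip), |Di i w x| := by
    have hfeq : (fun x : Fin 2 → ℝ => |Di i w (pick i (x i) (x (other i)))|)
        = fun x => |Di i w x| := by
      funext x; rw [pick_eta]
    have hint : IntegrableOn (fun x : Fin 2 → ℝ => |Di i w (pick i (x i) (x (other i)))|)
        (Set.univ.pi (pick i J strip)) := by
      rw [hfeq]
      exact integrableOn_pi_pick i hqc (subset_rfl : J ⊆ J) hstripIcc
    have hip := integral_pick_rev i J strip hJM hstripM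
      (fun t v => |Di i w (pick i t v)|) hint
    calc C = ∫ x in Set.univ.pi (pick i J strip), |Di i w (pick i (x i) (x (other i)))| :=
          hip.symm
      _ = ∫ x in Set.univ.pi (pick i J strip), |Di i w x| :=
          setIntegral_congr_fun (measurableSet_pi_pick i hJM hstripM)
            (fun x _ => congrFun hfeq x)
  have hfinal : (h*h)⁻¹ * (C * h) = (N:ℝ) * C := by
    rw [hdef]
    field_simp
  calc |Wz N w (pick i (a+1) b) - Wz N w (pick i a b)| ≤ (h*h)⁻¹ * (C * h) := hmain
    _ = (N:ℝ) * C := hfinal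
    _ = (N:ℝ) * ∫ x in Set.univ.pi (pick i J strip), |Di i w x| := by rw [hCeq]



lemma continuous_hat (h : ℝ) (j : ℕ) : Continuous (hatFn h j) := by
  apply continuous_const.max
  exact continuous_const.sub ((continuous_id.div_const h).sub continuous_const).abs

lemma hat_int_left {h : ℝ} (hh : 0 < h) (b : ℕ) :
    ∫ s in Icc ((b:ℝ)*h) (((b:ℝ)+1)*h), hatFn h b s = h/2 := by
  have hle : (b:ℝ)*h ≤ ((b:ℝ)+1)*h := by nlinarith
  rw [integral_Icc_eq_integral_Ioc, ← intervalIntegral.integral_of_le hle]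
  have hcongr : EqOn (hatFn h b) (fun s => ((b:ℝ)+1) - s * h⁻¹)
      (uIcc ((b:ℝ)*h) (((b:ℝ)+1)*h)) := by
    intro s hs
    rw [uIcc_of_le hle, mem_Icc] at hs
    have h1 : (b:ℝ) ≤ s / h := (le_div_iff₀ hh).2 hs.1
    have h2 : s / h ≤ (b:ℝ) + 1 := (div_le_iff₀ hh).2 hs.2
    rw [hatFn, abs_of_nonneg (by linarith), max_eq_right (by linarith), div_eq_mul_inv]
    ring
  rw [intervalIntegral.integral_congr hcongr]
  rw [intervalIntegral.integral_sub (intervalIntegrable_const)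
    ((continuous_mul_right h⁻¹).intervalIntegrable _ _)]
  rw [intervalIntegral.integral_const, intervalIntegral.integral_mul_const, integral_id]
  rw [smul_eq_mul]
  field_simp
  ring

lemma hat_int_right {h : ℝ} (hh : 0 < h) (b : ℕ) :
    ∫ s in Icc ((b:ℝ)*h) (((b:ℝ)+1)*h), hatFn h (b+1) s = h/2 := by
  have hle : (b:ℝ)*h ≤ ((b:ℝ)+1)*h := by nlinarith
  rw [integral_Icc_eq_integral_Ioc, ← intervalIntegral.integral_of_le hle]
  have hcongr : EqOn (hatFn h (b+1)) (fun s => s * h⁻¹ - (b:ℝ))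
      (uIcc ((b:ℝ)*h) (((b:ℝ)+1)*h)) := by
    intro s hs
    rw [uIcc_of_le hle, mem_Icc] at hs
    have h1 : (b:ℝ) ≤ s / h := (le_div_iff₀ hh).2 hs.1
    have h2 : s / h ≤ (b:ℝ) + 1 := (div_le_iff₀ hh).2 hs.2
    rw [hatFn]
    push_cast
    rw [abs_of_nonpos (by linarith), max_eq_right (by linarith), div_eq_mul_inv]
    ring
  rw [intervalIntegral.integral_congr hcongr]
  rw [intervalIntegral.integral_sub ((continuous_mul_right h⁻¹).intervalIntegrable _ _)
    (intervalIntegrable_const)]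
  rw [intervalIntegral.integral_const, intervalIntegral.integral_mul_const, integral_id]
  rw [smul_eq_mul]
  field_simp
  ring

lemma inner_bound {h : ℝ} (hh : 0 < h) (c A B : ℝ) (b : ℕ) :
    ∫ v in Icc ((b:ℝ)*h) (((b:ℝ)+1)*h), |c * (A * hatFn h b v + B * hatFn h (b+1) v)|
      ≤ |c| * (|A| + |B|) * (h/2) := by
  have hmono : ∫ v in Icc ((b:ℝ)*h) (((b:ℝ)+1)*h),
      |c * (A * hatFn h b v + B * hatFn h (b+1) v)|
      ≤ ∫ v in Icc ((b:ℝ)*h) (((b:ℝ)+1)*h),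
        (|c| * (|A| * hatFn h b v + |B| * hatFn h (b+1) v)) := by
    apply setIntegral_mono_on
    · apply ContinuousOn.integrableOn_compact isCompact_Icc
      apply Continuous.continuousOn
      exact (continuous_const.mul ((continuous_const.mul (continuous_hat h b)).add
        (continuous_const.mul (continuous_hat h (b+1))))).abs
    · apply ContinuousOn.integrableOn_compact isCompact_Icc
      apply Continuous.continuousOn
      exact continuous_const.mul ((continuous_const.mul (continuous_hat h b)).add
        (continuous_const.mul (continuous_hat h (b+1))))
    · exact measurableSet_Icc
    · intro v _
      rw [abs_mul]
      apply mul_le_mul_of_nonneg_left _ (abs_nonneg c)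
      refine (abs_add_le _ _).trans ?_
      rw [abs_mul, abs_mul, abs_of_nonneg (hat_nonneg h b v),
        abs_of_nonneg (hat_nonneg h (b+1) v)]
  refine hmono.trans ?_
  rw [integral_const_mul]
  have hadd : ∫ v in Icc ((b:ℝ)*h) (((b:ℝ)+1)*h),
      (|A| * hatFn h b v + |B| * hatFn h (b+1) v)
      = |A| * (h/2) + |B| * (h/2) := by
    rw [integral_add (f := fun v => |A| * hatFn h b v) (g := fun v => |B| * hatFn h (b+1) v)
      ((continuous_const.mul (continuous_hat h b)).continuousOn.integrableOn_compact
        isCompact_Icc)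
      ((continuous_const.mul (continuous_hat h (b+1))).continuousOn.integrableOn_compact
        isCompact_Icc),
      integral_const_mul, integral_const_mul, hat_int_left hh, hat_int_right hh]
  rw [hadd]
  exact le_of_eq (by ring)



lemma null_hyperplane (i : Fin 2) (c : ℝ) : volume {x : Fin 2 → ℝ | x i = c} = 0 := by
  have hset : {x : Fin 2 → ℝ | x i = c} = Set.univ.pi (pick i {c} univ) := by
    ext x
    rw [Set.mem_univ_pi]
    constructor
    · intro hx j
      rcases eq_or_eq_other i j with hj | hj <;> rw [hj]
      · rw [pick_self]; exact hx
      · rw [pick_other]; trivial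
    · intro hx
      have := hx i
      rw [pick_self] at this
      exact this
  rw [hset, volume_pick i _ _ (measurableSet_singleton c) MeasurableSet.univ,
    Real.volume_singleton, zero_mul]

lemma pi_pick_Icc_ae (i : Fin 2) (p q : ℝ) (t : Set ℝ) :
    (Set.univ.pi (pick i (Icc p q) t) : Set (Fin 2 → ℝ))
      =ᵐ[volume] Set.univ.pi (pick i (Ioo p q) t) := by
  rw [MeasureTheory.ae_eq_set]
  constructor
  · apply measure_mono_null _
      (measure_union_null (null_hyperplane i p) (null_hyperplane i q))
    rintro x ⟨hx1, hx2⟩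
    rw [Set.mem_univ_pi] at hx1
    have hxi := hx1 i
    rw [pick_self] at hxi
    by_contra hcon
    rw [Set.mem_union] at hcon
    push_neg at hcon
    apply hx2
    rw [Set.mem_univ_pi]
    intro j
    rcases eq_or_eq_other i j with hj | hj <;> rw [hj]
    · rw [pick_self]
      exact ⟨lt_of_le_of_ne hxi.1 (Ne.symm hcon.1), lt_of_le_of_ne hxi.2 hcon.2⟩
    · rw [pick_other]
      have := hx1 (other i)
      rwa [pick_other] at this
  · rw [Set.diff_eq_empty.2 (pi_pick_subset i Ioo_subset_Icc_self subset_rfl)]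
    exact measure_empty

def patchI (h' : ℝ) (m : ℕ) : Set ℝ := Icc (max (((m:ℝ)-1)*h') 0) (min (((m:ℝ)+2)*h') 1)

lemma meshPatch_eq (i : Fin 2) (N : ℕ) (hN0 : (0:ℝ) < N) (k : Fin 2 → ℕ) :
    meshPatch N k = Set.univ.pi
      (pick i (patchI (N:ℝ)⁻¹ (k i)) (patchI (N:ℝ)⁻¹ (k (other i)))) := by
  have hdiv : ∀ c : ℝ, c / N = c * (N:ℝ)⁻¹ := fun c => div_eq_mul_inv c _
  have hiff : ∀ (m : ℕ) (y : ℝ),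
      (((m:ℝ) - 1) / N ≤ y ∧ y ≤ ((m:ℝ) + 2) / N ∧ 0 ≤ y ∧ y ≤ 1)
        ↔ y ∈ patchI (N:ℝ)⁻¹ m := by
    intro m y
    rw [patchI, mem_Icc, max_le_iff, le_min_iff, hdiv, hdiv]
    tauto
  ext x
  rw [Set.mem_univ_pi]
  constructor
  · intro hx j
    have := (hiff (k j) (x j)).1 (hx j)
    rcases eq_or_eq_other i j with hj | hj
    · rw [hj] at this ⊢; rwa [pick_self]
    · rw [hj] at this ⊢; rwa [pick_other]
  · intro hx j
    apply (hiff (k j) (x j)).2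
    have hj' := hx j
    rcases eq_or_eq_other i j with hj | hj
    · rw [hj] at hj' ⊢; rwa [pick_self] at hj'
    · rw [hj] at hj' ⊢; rwa [pick_other] at hj'

lemma meshCell_eq (i : Fin 2) (N : ℕ) (k : Fin 2 → ℕ) :
    meshCell N k = Set.univ.pi
      (pick i (Icc ((k i:ℝ)*(N:ℝ)⁻¹) (((k i:ℝ)+1)*(N:ℝ)⁻¹))
              (Icc ((k (other i):ℝ)*(N:ℝ)⁻¹) (((k (other i):ℝ)+1)*(N:ℝ)⁻¹))) := by
  have hdiv : ∀ c : ℝ, c / N = c * (N:ℝ)⁻¹ := fun c => div_eq_mul_inv c _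
  ext x
  rw [Set.mem_univ_pi]
  constructor
  · intro hx j
    have hj' := hx j
    rw [hdiv, hdiv, ← mem_Icc] at hj'
    rcases eq_or_eq_other i j with hj | hj
    · rw [hj] at hj' ⊢; rwa [pick_self]
    · rw [hj] at hj' ⊢; rwa [pick_other]
  · intro hx j
    rw [show ((k j : ℝ)/N ≤ x j ∧ x j ≤ ((k j:ℝ)+1)/N)
        ↔ x j ∈ Icc ((k j:ℝ)*(N:ℝ)⁻¹) (((k j:ℝ)+1)*(N:ℝ)⁻¹) from by
      rw [mem_Icc, hdiv, hdiv]]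
    have hj' := hx j
    rcases eq_or_eq_other i j with hj | hj
    · rw [hj] at hj' ⊢; rwa [pick_self] at hj'
    · rw [hj] at hj' ⊢; rwa [pick_other] at hj'



set_option maxHeartbeats 1000000 in
theorem main (N : ℕ) (hN : 2 ≤ N)
    (w : (Fin 2 → ℝ) → ℝ) (hw : ContDiff ℝ 1 w)
    (hw0 : ∀ x, x ∉ unitCube 2 → w x = 0) :
    ∀ (i : Fin 2) (k : Fin 2 → ℕ), (∀ j, k j ≤ N - 1) →
      (∫ x in meshCell N k, |pderivI 2 i (interpQ 2 N w) x|) ≤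
        ∫ x in meshPatch N k, |pderivI 2 i w x| := by
  intro i k hk
  have hN0 : (0:ℝ) < N := by
    have : (2:ℝ) ≤ N := by exact_mod_cast hN
    linarith
  have hNne : (N:ℝ) ≠ 0 := ne_of_gt hN0
  set h : ℝ := (N:ℝ)⁻¹ with hdef
  have hh : 0 < h := by positivity
  have hhN : h * N = 1 := inv_mul_cancel₀ hNne
  have hki : k i + 1 ≤ N := by have := hk i; omega
  have hko : k (other i) + 1 ≤ N := by have := hk (other i); omega
  set a := k i with hadef
  set b := k (other i) with hbdef
  have hbN : (b:ℝ) + 1 ≤ (N:ℝ) := by exact_mod_cast hko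
  set R : ℝ := ∫ x in meshPatch N k, |Di i w x| with hR
  have hqc : Continuous fun y => |Di i w y| := (continuous_Di hw i).abs
  have hpatchEq := meshPatch_eq i N hN0 k
  have hpatchM : MeasurableSet (meshPatch N k) := by
    rw [hpatchEq]; exact measurableSet_pi_pick i measurableSet_Icc measurableSet_Icc
  have hDint : IntegrableOn (fun x => |Di i w x|) (meshPatch N k) := by
    rw [hpatchEq]
    exact integrableOn_pi_pick i hqc
      (subset_rfl : patchI h a ⊆ Icc _ _) (subset_rfl : patchI h b ⊆ Icc _ _)
  have hRnn : 0 ≤ R := setIntegral_nonneg hpatchM (fun x _ => abs_nonneg _)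
  have hRHS : ∫ x in meshPatch N k, |pderivI 2 i w x| = R :=
    setIntegral_congr_fun hpatchM (fun x _ => by rw [pderiv_eq hw])
  have hWz0 : ∀ (p m : ℕ), ¬(1 ≤ m ∧ m ≤ N - 1) → Wz N w (pick i p m) = 0 := by
    intro p m hm
    rw [Wz, if_neg]
    intro hmem
    have := (mem_IccF_iff.1 hmem) (other i)
    rw [pick_other] at this
    exact hm this
  set A : ℝ := Wz N w (pick i (a+1) b) - Wz N w (pick i a b) with hA
  set B : ℝ := Wz N w (pick i (a+1) (b+1)) - Wz N w (pick i a (b+1)) with hB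
  -- the J-interval from diff_bound is inside the patch interval for coordinate i
  have hJsub : Icc (max 0 ((if a = 0 then -h else h * (a:ℝ)) - h/2))
      (min 1 ((if a + 1 = N then h * ((N:ℝ)+1) else h * ((a:ℝ)+1)) + h/2))
      ⊆ patchI h a := by
    apply Icc_subset_Icc
    · apply max_le
      · by_cases ha0 : a = 0
        · have h1 : ((a:ℝ)-1)*h ≤ 0 := by
            rw [ha0]; push_cast; linarith
          exact h1.trans (le_max_left _ _)
        · have h1a : (1:ℝ) ≤ (a:ℝ) := by
            exact_mod_cast Nat.one_le_iff_ne_zero.2 ha0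
          have h1 : ((a:ℝ)-1)*h ≤ (if a = 0 then -h else h * (a:ℝ)) - h/2 := by
            rw [if_neg ha0]
            have : h/2 ≤ h*1 := by linarith
            nlinarith [mul_le_mul_of_nonneg_left h1a hh.le]
          exact h1.trans (le_max_right _ _)
      · exact le_max_left _ _
    · apply le_min
      · by_cases haN : a + 1 = N
        · have hNa : (N:ℝ) = (a:ℝ)+1 := by exact_mod_cast haN.symm
          have h1 : (1:ℝ) ≤ ((a:ℝ)+2)*h := by
            have : ((a:ℝ)+1)*h ≤ ((a:ℝ)+2)*h := by linarith
            calc (1:ℝ) = h * N := hhN.symm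
              _ = ((a:ℝ)+1)*h := by rw [hNa]; ring
              _ ≤ ((a:ℝ)+2)*h := this
          exact (min_le_left _ _).trans h1
        · have h1 : (if a + 1 = N then h * ((N:ℝ)+1) else h * ((a:ℝ)+1)) + h/2
              ≤ ((a:ℝ)+2)*h := by
            rw [if_neg haN]; linarith
          exact (min_le_right _ _).trans h1
      · exact min_le_left _ _
  have hDiffA : |A| ≤ (N:ℝ) * R := by
    by_cases hb0 : 1 ≤ b
    · have hb1R : (1:ℝ) ≤ (b:ℝ) := by exact_mod_cast hb0
      have hd := diff_bound N hN w hw hw0 i a b hki hb0 hko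
      rw [← hdef] at hd
      refine hd.trans ?_
      apply mul_le_mul_of_nonneg_left _ hN0.le
      apply setIntegral_mono_set hDint (Filter.Eventually.of_forall fun x => abs_nonneg _)
      apply HasSubset.Subset.eventuallyLE
      rw [hpatchEq]
      apply pi_pick_subset i hJsub
      have e1 : h*1 ≤ h*(b:ℝ) := mul_le_mul_of_nonneg_left hb1R hh.le
      have e2 : h*(b:ℝ) ≤ h*((N:ℝ)-1) := mul_le_mul_of_nonneg_left (by linarith) hh.le
      refine (Ioo_subset_Icc_self).trans (Icc_subset_Icc ?_ ?_)
      · apply max_le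
        · linarith
        · linarith
      · apply le_min
        · linarith
        · linarith [hhN]
    · have h1 : Wz N w (pick i (a+1) b) = 0 := hWz0 _ _ (by omega)
      have h2 : Wz N w (pick i a b) = 0 := hWz0 _ _ (by omega)
      rw [hA, h1, h2, sub_zero, abs_zero]
      exact mul_nonneg hN0.le hRnn
  have hDiffB : |B| ≤ (N:ℝ) * R := by
    by_cases hb2 : b + 2 ≤ N
    · have hb2R : (b:ℝ) + 2 ≤ (N:ℝ) := by exact_mod_cast hb2
      have hd := diff_bound N hN w hw hw0 i a (b+1) hki (by omega) (by omega)
      have hcast : ((b+1 : ℕ):ℝ) = (b:ℝ)+1 := by push_cast; ring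
      rw [hcast, ← hdef] at hd
      refine hd.trans ?_
      apply mul_le_mul_of_nonneg_left _ hN0.le
      apply setIntegral_mono_set hDint (Filter.Eventually.of_forall fun x => abs_nonneg _)
      apply HasSubset.Subset.eventuallyLE
      rw [hpatchEq]
      apply pi_pick_subset i hJsub
      have e1 : h*1 ≤ h*((b:ℝ)+1) :=
        mul_le_mul_of_nonneg_left (by linarith [Nat.cast_nonneg (α := ℝ) b]) hh.le
      have e2 : h*((b:ℝ)+1) ≤ h*((N:ℝ)-1) := mul_le_mul_of_nonneg_left (by linarith) hh.le
      refine (Ioo_subset_Icc_self).trans (Icc_subset_Icc ?_ ?_)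
      · apply max_le
        · linarith
        · linarith
      · apply le_min
        · linarith
        · linarith [hhN]
    · have h1 : Wz N w (pick i (a+1) (b+1)) = 0 := hWz0 _ _ (by omega)
      have h2 : Wz N w (pick i a (b+1)) = 0 := hWz0 _ _ (by omega)
      rw [hB, h1, h2, sub_zero, abs_zero]
      exact mul_nonneg hN0.le hRnn
  -- LHS computation
  set S : Set (Fin 2 → ℝ) := Set.univ.pi
    (pick i (Ioo ((a:ℝ)*h) (((a:ℝ)+1)*h)) (Icc ((b:ℝ)*h) (((b:ℝ)+1)*h))) with hS
  have hSM : MeasurableSet S := measurableSet_pi_pick i measurableSet_Ioo measurableSet_Icc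
  have hres : ∫ x in meshCell N k, |pderivI 2 i (interpQ 2 N w) x|
      = ∫ x in S, |pderivI 2 i (interpQ 2 N w) x| := by
    rw [meshCell_eq i N k]
    exact setIntegral_congr_set (pi_pick_Icc_ae i _ _ _)
  have hfun : ∀ x ∈ S, |pderivI 2 i (interpQ 2 N w) x|
      = |(N:ℝ) * (A * hatFn h b (x (other i)) + B * hatFn h (b+1) (x (other i)))| := by
    intro x hx
    rw [Set.mem_univ_pi] at hx
    have hxi := hx i
    rw [pick_self] at hxi
    have hxo := hx (other i)
    rw [pick_other] at hxo
    rw [pderiv_interp N hN w i k x hxi hxo]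
  have hLHS1 : ∫ x in S, |pderivI 2 i (interpQ 2 N w) x|
      = ∫ x in S, |(N:ℝ) * (A * hatFn h b (x (other i)) + B * hatFn h (b+1) (x (other i)))| :=
    setIntegral_congr_fun hSM hfun
  have hcontG : Continuous fun x : Fin 2 → ℝ =>
      |(N:ℝ) * (A * hatFn h b (x (other i)) + B * hatFn h (b+1) (x (other i)))| := by
    apply Continuous.abs
    apply continuous_const.mul
    exact (continuous_const.mul ((continuous_hat h b).comp (continuous_apply (other i)))).add
      (continuous_const.mul ((continuous_hat h (b+1)).comp (continuous_apply (other i))))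
  have hpick : ∫ x in S, |(N:ℝ) * (A * hatFn h b (x (other i)) + B * hatFn h (b+1) (x (other i)))|
      = ∫ u in Ioo ((a:ℝ)*h) (((a:ℝ)+1)*h), ∫ v in Icc ((b:ℝ)*h) (((b:ℝ)+1)*h),
          |(N:ℝ) * (A * hatFn h b v + B * hatFn h (b+1) v)| := by
    rw [hS]
    exact integral_pick i _ _ measurableSet_Ioo measurableSet_Icc
      (fun _ v => |(N:ℝ) * (A * hatFn h b v + B * hatFn h (b+1) v)|)
      (integrableOn_pi_pick i hcontG Ioo_subset_Icc_self (subset_rfl : Icc _ _ ⊆ Icc _ _))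
  have hconst : ∫ u in Ioo ((a:ℝ)*h) (((a:ℝ)+1)*h), (∫ v in Icc ((b:ℝ)*h) (((b:ℝ)+1)*h),
        |(N:ℝ) * (A * hatFn h b v + B * hatFn h (b+1) v)|)
      = h * ∫ v in Icc ((b:ℝ)*h) (((b:ℝ)+1)*h),
        |(N:ℝ) * (A * hatFn h b v + B * hatFn h (b+1) v)| := by
    rw [setIntegral_const, measureReal_def, Real.volume_Ioo,
      show ((a:ℝ)+1)*h - (a:ℝ)*h = h from by ring, ENNReal.toReal_ofReal hh.le, smul_eq_mul]
  have hinner : ∫ v in Icc ((b:ℝ)*h) (((b:ℝ)+1)*h),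
        |(N:ℝ) * (A * hatFn h b v + B * hatFn h (b+1) v)|
      ≤ (N:ℝ) * (|A| + |B|) * (h/2) := by
    have := inner_bound hh (N:ℝ) A B b
    rwa [abs_of_pos hN0] at this
  calc ∫ x in meshCell N k, |pderivI 2 i (interpQ 2 N w) x|
      = h * ∫ v in Icc ((b:ℝ)*h) (((b:ℝ)+1)*h),
          |(N:ℝ) * (A * hatFn h b v + B * hatFn h (b+1) v)| := by
        rw [hres, hLHS1, hpick, hconst]
    _ ≤ h * ((N:ℝ) * (|A| + |B|) * (h/2)) := mul_le_mul_of_nonneg_left hinner hh.le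
    _ ≤ h * ((N:ℝ) * ((N:ℝ)*R + (N:ℝ)*R) * (h/2)) := by
        apply mul_le_mul_of_nonneg_left _ hh.le
        apply mul_le_mul_of_nonneg_right _ (by positivity)
        apply mul_le_mul_of_nonneg_left _ hN0.le
        linarith
    _ = (h*(N:ℝ)) * ((h*(N:ℝ)) * R) := by ring
    _ = R := by rw [hhN]; ring
    _ = ∫ x in meshPatch N k, |pderivI 2 i w x| := hRHS.symm



end S14

/-- orthotropic `W^{1,1}` stability with constant one, `d = 2`:
for `w ∈ C¹` vanishing outside `Ω = (0,1)²`,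
`∫_{Q_k} |∂_i (Π_h w)| ≤ ∫_{𝒩_k} |∂_i w|` for each cell `Q_k` and `i ∈ {1,2}`. -/
theorem statement14 (N : ℕ) (hN : 2 ≤ N)
    (w : (Fin 2 → ℝ) → ℝ) (hw : ContDiff ℝ 1 w)
    (hw0 : ∀ x, x ∉ unitCube 2 → w x = 0) :
    ∀ (i : Fin 2) (k : Fin 2 → ℕ), (∀ j, k j ≤ N - 1) →
      (∫ x in meshCell N k, |pderivI 2 i (interpQ 2 N w) x|) ≤
        ∫ x in meshPatch N k, |pderivI 2 i w x| := by
  exact S14.main N hN w hw hw0
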